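/- Let (J_n, X_n) be a Markov chain on X × ℝ (real-valued, possibly negative rewards) with X finite, U_0 = min{n ≥ 1 : J_n = 0} a.s. finite from every initial state, and E_i|X_1|^d < ∞ for all i ∈ X. Then the accumulated reward W_0 = Σ_{n=1}^{U_0} X_n satisfies E_i|W_0|^d < ∞ for all i ∈ X. -/

import Mathlib

open MeasureTheory ENNReal

/-- Prepend one step to a trajectory of a Markov renewal process with real-valued
increments. The path `ω` encodes `ω n = (J_{n+1}, X_{n+1})`. -/
def consStep {X : Type*} (q : X × ℝ) (ω : ℕ → X × ℝ) : ℕ → X × ℝ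
  | 0 => q
  | n + 1 => ω n

/-- Accumulated (real-valued) reward `W₀ = ∑_{n=1}^{U₀} X_n` up to the first hitting time
`U₀ = min{n ≥ 1 : J_n = 0}` (in the path encoding `ω n = (J_{n+1}, X_{n+1})`). -/
noncomputable def hitReward {X : Type*} [Zero X] (ω : ℕ → X × ℝ) : ℝ :=
  ∑ n ∈ Finset.range (sInf {n | (ω n).1 = 0} + 1), (ω n).2

namespace MRPaux

variable {m : ℕ}

/-- The event "no hit of state 0 among the first `n` coordinates". -/
def AA (m n : ℕ) : Set (ℕ → Fin (m + 1) × ℝ) := {ω | ∀ k < n, (ω k).1 ≠ 0}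

lemma measurable_consStep (q : Fin (m + 1) × ℝ) :
    Measurable (consStep q : (ℕ → Fin (m + 1) × ℝ) → (ℕ → Fin (m + 1) × ℝ)) := by
  apply measurable_pi_lambda
  intro n
  cases n with
  | zero => exact measurable_const
  | succ k => exact measurable_pi_apply k

lemma measurable_consStep2 :
    Measurable fun p : (Fin (m + 1) × ℝ) × (ℕ → Fin (m + 1) × ℝ) => consStep p.1 p.2 := by
  apply measurable_pi_lambda
  intro n
  cases n with
  | zero => exact measurable_fst
  | succ k => exact (measurable_pi_apply k).comp measurable_snd

lemma measA (n : ℕ) : MeasurableSet (AA m n) := by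
  have : AA m n = ⋂ k ∈ Finset.range n, {ω : ℕ → Fin (m + 1) × ℝ | (ω k).1 ≠ 0} := by
    ext ω
    simp [AA, Set.mem_iInter]
  rw [this]
  refine MeasurableSet.biInter (Finset.range n).countable_toSet fun k _ => ?_
  have h : Measurable fun ω : ℕ → Fin (m + 1) × ℝ => (ω k).1 :=
    measurable_fst.comp (measurable_pi_apply k)
  exact (h (MeasurableSet.singleton 0)).compl

lemma antitoneA : Antitone (AA m) := fun a b hab ω hω k hk => hω k (lt_of_lt_of_le hk hab)

lemma consStep_mem_A (q : Fin (m + 1) × ℝ) (ω : ℕ → Fin (m + 1) × ℝ) (n : ℕ) :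
    consStep q ω ∈ AA m (n + 1) ↔ q.1 ≠ 0 ∧ ω ∈ AA m n := by
  constructor
  · intro h
    refine ⟨h 0 (Nat.succ_pos n), fun k hk => h (k + 1) (Nat.succ_lt_succ hk)⟩
  · rintro ⟨h0, h1⟩ k hk
    cases k with
    | zero => exact h0
    | succ j => exact h1 j (Nat.lt_of_succ_lt_succ hk)

section

variable (Q : Fin (m + 1) → Measure (Fin (m + 1) × ℝ))
variable (μ : Fin (m + 1) → Measure (ℕ → Fin (m + 1) × ℝ))

/-- The one-step kernel `q ↦ (μ q.1).map (consStep q)` is measurable. -/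
lemma measurable_kernel (hprob : ∀ i, IsProbabilityMeasure (μ i)) :
    Measurable fun q : Fin (m + 1) × ℝ => Measure.map (consStep q) (μ q.1) := by
  rw [Measure.measurable_measure]
  intro s hs
  have hT : MeasurableSet
      ((fun p : (Fin (m + 1) × ℝ) × (ℕ → Fin (m + 1) × ℝ) => consStep p.1 p.2) ⁻¹' s) :=
    measurable_consStep2 hs
  have heq : ∀ q : Fin (m + 1) × ℝ,
      Measure.map (consStep q) (μ q.1) s =
        μ q.1 (Prod.mk q ⁻¹'
          ((fun p : (Fin (m + 1) × ℝ) × (ℕ → Fin (m + 1) × ℝ) => consStep p.1 p.2) ⁻¹' s)) := by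
    intro q
    rw [Measure.map_apply (measurable_consStep q) hs]
    rfl
  simp_rw [heq]
  have hrw : (fun q : Fin (m + 1) × ℝ =>
      μ q.1 (Prod.mk q ⁻¹'
        ((fun p : (Fin (m + 1) × ℝ) × (ℕ → Fin (m + 1) × ℝ) => consStep p.1 p.2) ⁻¹' s))) =
      fun q => ∑ j : Fin (m + 1), Set.indicator (Prod.fst ⁻¹' {j})
        (fun q' => μ j (Prod.mk q' ⁻¹'
          ((fun p : (Fin (m + 1) × ℝ) × (ℕ → Fin (m + 1) × ℝ) => consStep p.1 p.2) ⁻¹' s))) q := by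
    funext q
    rw [Finset.sum_eq_single q.1]
    · simp [Set.indicator]
    · intro j _ hj
      simp [Set.indicator, Ne.symm hj]
    · simp
  rw [hrw]
  refine Finset.measurable_sum _ fun j _ => ?_
  refine Measurable.indicator ?_ (measurable_fst (MeasurableSet.singleton j))
  exact measurable_measure_prodMk_left hT

/-- The Markov-renewal property at the level of Lebesgue integrals. -/
lemma markov_lintegral
    (hprob : ∀ i, IsProbabilityMeasure (μ i))
    (hMRP : ∀ (i : Fin (m + 1)) (A : Set (ℕ → Fin (m + 1) × ℝ)), MeasurableSet A →
      μ i A = ∫⁻ q, μ q.1 {ω | consStep q ω ∈ A} ∂ Q i)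
    (i : Fin (m + 1)) (F : (ℕ → Fin (m + 1) × ℝ) → ℝ≥0∞) (hF : Measurable F) :
    ∫⁻ ω, F ω ∂ μ i = ∫⁻ q, ∫⁻ ω, F (consStep q ω) ∂ μ q.1 ∂ Q i := by
  have hκ := measurable_kernel μ hprob
  have hbind : μ i = (Q i).bind fun q => Measure.map (consStep q) (μ q.1) := by
    ext A hA
    rw [Measure.bind_apply hA hκ.aemeasurable, hMRP i A hA]
    refine lintegral_congr fun q => ?_
    rw [Measure.map_apply (measurable_consStep q) hA]
    rfl
  rw [hbind, Measure.lintegral_bind hκ.aemeasurable hF.aemeasurable]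
  refine lintegral_congr fun q => ?_
  rw [lintegral_map hF (measurable_consStep q)]

variable
    (hQ : ∀ i, IsProbabilityMeasure (Q i))
    (hprob : ∀ i, IsProbabilityMeasure (μ i))
    (hMRP : ∀ (i : Fin (m + 1)) (A : Set (ℕ → Fin (m + 1) × ℝ)), MeasurableSet A →
      μ i A = ∫⁻ q, μ q.1 {ω | consStep q ω ∈ A} ∂ Q i)

include hMRP in
/-- One-step recursion for the no-hit probabilities. -/
lemma tail_succ (i : Fin (m + 1)) (n : ℕ) :
    μ i (AA m (n + 1)) =
      ∫⁻ q, Set.indicator {q : Fin (m + 1) × ℝ | q.1 ≠ 0} (fun q => μ q.1 (AA m n)) q ∂ Q i := by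
  rw [hMRP i (AA m (n + 1)) (measA _)]
  refine lintegral_congr fun q => ?_
  by_cases h : q.1 = 0
  · have : {ω : ℕ → Fin (m + 1) × ℝ | consStep q ω ∈ AA m (n + 1)} = ∅ := by
      ext ω
      simp [consStep_mem_A, h]
    simp [this, Set.indicator, h]
  · have : {ω : ℕ → Fin (m + 1) × ℝ | consStep q ω ∈ AA m (n + 1)} = AA m n := by
      ext ω
      simp [consStep_mem_A, h]
    simp [this, Set.indicator, h]

include hprob hMRP in
/-- Submultiplicativity of no-hit probabilities. -/
lemma tail_submul (n ms : ℕ) (i : Fin (m + 1)) :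
    μ i (AA m (n + ms)) ≤ (⨆ j, μ j (AA m ms)) * μ i (AA m n) := by
  induction n generalizing i with
  | zero =>
    have h0 : μ i (AA m 0) = 1 := by
      have : AA m 0 = Set.univ := by ext ω; simp [AA]
      rw [this]
      exact (hprob i).measure_univ
    rw [Nat.zero_add, h0, mul_one]
    exact le_iSup (fun j => μ j (AA m ms)) i
  | succ n ih =>
    have hrw : n + 1 + ms = (n + ms) + 1 := by omega
    rw [hrw, tail_succ Q μ hMRP i (n + ms), tail_succ Q μ hMRP i n]
    set G := ⨆ j, μ j (AA m ms) with hG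
    have hGtop : G ≠ ⊤ := by
      refine ne_top_of_le_ne_top (b := 1) one_ne_top (iSup_le fun j => prob_le_one)
    calc ∫⁻ q, Set.indicator {q : Fin (m + 1) × ℝ | q.1 ≠ 0}
            (fun q => μ q.1 (AA m (n + ms))) q ∂ Q i
        ≤ ∫⁻ q, G * Set.indicator {q : Fin (m + 1) × ℝ | q.1 ≠ 0}
            (fun q => μ q.1 (AA m n)) q ∂ Q i := by
          refine lintegral_mono fun q => ?_
          by_cases h : q.1 = 0
          · simp [Set.indicator, h]
          · simpa [Set.indicator, h] using ih q.1
      _ = G * ∫⁻ q, Set.indicator {q : Fin (m + 1) × ℝ | q.1 ≠ 0}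
            (fun q => μ q.1 (AA m n)) q ∂ Q i := lintegral_const_mul' _ _ hGtop

include hprob hMRP in
lemma tail_pow (N : ℕ) (k : ℕ) (i : Fin (m + 1)) :
    μ i (AA m (k * N)) ≤ (⨆ j, μ j (AA m N)) ^ k := by
  induction k generalizing i with
  | zero =>
    have : AA m 0 = Set.univ := by ext ω; simp [AA]
    simp [this, (hprob i).measure_univ]
  | succ k ih =>
    have hrw : (k + 1) * N = N + k * N := by ring
    rw [hrw]
    calc μ i (AA m (N + k * N)) ≤ (⨆ j, μ j (AA m (k * N))) * μ i (AA m N) :=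
          tail_submul Q μ hprob hMRP N (k * N) i
      _ ≤ (⨆ j, μ j (AA m N)) ^ k * (⨆ j, μ j (AA m N)) := by
          refine mul_le_mul' (iSup_le fun j => ih j) (le_iSup (fun j => μ j (AA m N)) i)
      _ = (⨆ j, μ j (AA m N)) ^ (k + 1) := by ring

lemma measurable_absPow (d n : ℕ) :
    Measurable fun ω : ℕ → Fin (m + 1) × ℝ => (ENNReal.ofReal |(ω n).2|) ^ d :=
  (ENNReal.measurable_ofReal.comp ((measurable_snd.comp (measurable_pi_apply n)).abs)).pow_const d

include hprob hMRP in
/-- Key moment bound: `E_i[1_{no hit before n} |X at n|^d] ≤ M ⬝ P_i(no hit before n)`. -/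
lemma moment_bound (d : ℕ) (hMtop : (⨆ j, ∫⁻ q, (ENNReal.ofReal |q.2|) ^ d ∂ Q j) ≠ ⊤)
    (n : ℕ) (i : Fin (m + 1)) :
    ∫⁻ ω, Set.indicator (AA m n) (fun ω => (ENNReal.ofReal |(ω n).2|) ^ d) ω ∂ μ i
      ≤ (⨆ j, ∫⁻ q, (ENNReal.ofReal |q.2|) ^ d ∂ Q j) * μ i (AA m n) := by
  set M := ⨆ j, ∫⁻ q, (ENNReal.ofReal |q.2|) ^ d ∂ Q j with hM
  induction n generalizing i with
  | zero =>
    have hU : AA m 0 = (Set.univ : Set (ℕ → Fin (m + 1) × ℝ)) := by ext ω; simp [AA]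
    rw [hU]
    simp only [Set.indicator_univ]
    rw [markov_lintegral Q μ hprob hMRP i _ (measurable_absPow d 0)]
    have hinner : ∀ q : Fin (m + 1) × ℝ,
        ∫⁻ ω, (ENNReal.ofReal |((consStep q ω) 0).2|) ^ d ∂ μ q.1
          = (ENNReal.ofReal |q.2|) ^ d := by
      intro q
      have : ∀ ω : ℕ → Fin (m + 1) × ℝ, consStep q ω 0 = q := fun _ => rfl
      simp only [this, lintegral_const, (hprob q.1).measure_univ, mul_one]
    rw [lintegral_congr hinner, (hprob i).measure_univ, mul_one]
    exact le_iSup (fun j => ∫⁻ q, (ENNReal.ofReal |q.2|) ^ d ∂ Q j) i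
  | succ n ih =>
    rw [markov_lintegral Q μ hprob hMRP i _
      ((measurable_absPow d (n + 1)).indicator (measA (n + 1)))]
    have key : ∀ q : Fin (m + 1) × ℝ,
        ∫⁻ ω, Set.indicator (AA m (n + 1))
            (fun ω => (ENNReal.ofReal |(ω (n + 1)).2|) ^ d) (consStep q ω) ∂ μ q.1
          = Set.indicator {q : Fin (m + 1) × ℝ | q.1 ≠ 0}
              (fun q => ∫⁻ ω, Set.indicator (AA m n)
                (fun ω => (ENNReal.ofReal |(ω n).2|) ^ d) ω ∂ μ q.1) q := by
      intro q
      by_cases h : q.1 = 0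
      · have hz : ∀ ω : ℕ → Fin (m + 1) × ℝ, Set.indicator (AA m (n + 1))
            (fun ω => (ENNReal.ofReal |(ω (n + 1)).2|) ^ d) (consStep q ω) = 0 := by
          intro ω
          rw [Set.indicator_of_notMem]
          rw [consStep_mem_A]
          simp [h]
        rw [lintegral_congr hz, lintegral_zero,
          Set.indicator_of_notMem (by simp [h] : q ∉ {q : Fin (m + 1) × ℝ | q.1 ≠ 0})]
      · have hpt : ∀ ω : ℕ → Fin (m + 1) × ℝ, Set.indicator (AA m (n + 1))
            (fun ω => (ENNReal.ofReal |(ω (n + 1)).2|) ^ d) (consStep q ω)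
            = Set.indicator (AA m n) (fun ω => (ENNReal.ofReal |(ω n).2|) ^ d) ω := by
          intro ω
          by_cases hω : ω ∈ AA m n
          · rw [Set.indicator_of_mem ((consStep_mem_A q ω n).2 ⟨h, hω⟩),
              Set.indicator_of_mem hω]
            rfl
          · rw [Set.indicator_of_notMem, Set.indicator_of_notMem hω]
            rw [consStep_mem_A]
            exact fun hc => hω hc.2
        rw [lintegral_congr hpt,
          Set.indicator_of_mem (show q ∈ {q : Fin (m + 1) × ℝ | q.1 ≠ 0} from h)]
    rw [lintegral_congr key]
    calc ∫⁻ q, Set.indicator {q : Fin (m + 1) × ℝ | q.1 ≠ 0}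
            (fun q => ∫⁻ ω, Set.indicator (AA m n)
              (fun ω => (ENNReal.ofReal |(ω n).2|) ^ d) ω ∂ μ q.1) q ∂ Q i
        ≤ ∫⁻ q, M * Set.indicator {q : Fin (m + 1) × ℝ | q.1 ≠ 0}
            (fun q => μ q.1 (AA m n)) q ∂ Q i := by
          refine lintegral_mono fun q => ?_
          by_cases h : q.1 = 0
          · simp [Set.indicator, h]
          · simpa [Set.indicator, h] using ih q.1
      _ = M * ∫⁻ q, Set.indicator {q : Fin (m + 1) × ℝ | q.1 ≠ 0}
            (fun q => μ q.1 (AA m n)) q ∂ Q i := lintegral_const_mul' _ _ hMtop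
      _ = M * μ i (AA m (n + 1)) := by rw [← tail_succ Q μ hMRP i n]

end

end MRPaux

open MRPaux in
/-- For a Markov renewal process with real-valued (possibly negative)
increments on a finite state space, if `U₀` is a.s. finite from every initial state and
`E_i|X₁|^d < ∞` for all `i`, then the accumulated reward `W₀ = ∑_{n=1}^{U₀} X_n` satisfies
`E_i|W₀|^d < ∞` for all `i`. -/
theorem dth_abs_moment_real_reward_finite {m : ℕ} (d : ℕ)
    (Q : Fin (m + 1) → Measure (Fin (m + 1) × ℝ))
    (hQ : ∀ i, IsProbabilityMeasure (Q i))
    (μ : Fin (m + 1) → Measure (ℕ → Fin (m + 1) × ℝ))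
    (hprob : ∀ i, IsProbabilityMeasure (μ i))
    (hMRP : ∀ (i : Fin (m + 1)) (A : Set (ℕ → Fin (m + 1) × ℝ)), MeasurableSet A →
      μ i A = ∫⁻ q, μ q.1 {ω | consStep q ω ∈ A} ∂ Q i)
    (hhit : ∀ i, μ i {ω | ∃ n, (ω n).1 = 0} = 1)
    (hmom : ∀ i, ∫⁻ q, (ENNReal.ofReal |q.2|) ^ d ∂ Q i ≠ ⊤) :
    ∀ i, ∫⁻ ω, (ENNReal.ofReal |hitReward ω|) ^ d ∂ μ i ≠ ⊤ := by
  intro i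
  rcases Nat.eq_zero_or_pos d with hd0 | hd
  · subst hd0
    simp only [pow_zero, lintegral_one, (hprob i).measure_univ]
    exact one_ne_top
  have hdR : (0 : ℝ) < (d : ℝ) := by exact_mod_cast hd
  have hd1 : (1 : ℝ) ≤ (d : ℝ) := by exact_mod_cast hd
  set M := ⨆ j, ∫⁻ q, (ENNReal.ofReal |q.2|) ^ d ∂ Q j with hMdef
  have hMtop : M ≠ ⊤ := by
    have hle : M ≤ ∑ j : Fin (m + 1), ∫⁻ q, (ENNReal.ofReal |q.2|) ^ d ∂ Q j :=
      iSup_le fun j => Finset.single_le_sum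
        (f := fun j => ∫⁻ q, (ENNReal.ofReal |q.2|) ^ d ∂ Q j)
        (fun _ _ => zero_le) (Finset.mem_univ j)
    have hsum : (∑ j : Fin (m + 1), ∫⁻ q, (ENNReal.ofReal |q.2|) ^ d ∂ Q j) ≠ ⊤ := by
      refine (ENNReal.sum_lt_top.mpr fun j _ => ?_).ne
      exact lt_top_iff_ne_top.mpr (hmom j)
    exact ne_top_of_le_ne_top hsum hle
  -- the no-hit probabilities tend to zero
  have hcap : ∀ j, Filter.Tendsto (fun n => μ j (AA m n)) Filter.atTop (nhds 0) := by
    intro j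
    have hinter : (⋂ n, AA m n) = {ω : ℕ → Fin (m + 1) × ℝ | ∃ n, (ω n).1 = 0}ᶜ := by
      ext ω
      simp only [Set.mem_iInter, Set.mem_compl_iff, Set.mem_setOf_eq, not_exists, AA]
      constructor
      · intro h n
        exact h (n + 1) n (Nat.lt_succ_self n)
      · intro h n k _
        exact h k
    have hmeashit : MeasurableSet {ω : ℕ → Fin (m + 1) × ℝ | ∃ n, (ω n).1 = 0} := by
      have : {ω : ℕ → Fin (m + 1) × ℝ | ∃ n, (ω n).1 = 0} =
          ⋃ n, (fun ω : ℕ → Fin (m + 1) × ℝ => (ω n).1) ⁻¹' {0} := by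
        ext ω; simp
      rw [this]
      exact MeasurableSet.iUnion fun n =>
        (measurable_fst.comp (measurable_pi_apply n)) (MeasurableSet.singleton 0)
    have h0 : μ j (⋂ n, AA m n) = 0 := by
      rw [hinter, measure_compl hmeashit (measure_ne_top _ _), hhit j,
        (hprob j).measure_univ, tsub_self]
    have htd := tendsto_measure_iInter_atTop (μ := μ j)
      (fun n => (measA n).nullMeasurableSet) antitoneA ⟨0, measure_ne_top _ _⟩
    rwa [h0] at htd
  have hNex : ∀ j, ∃ N, μ j (AA m N) ≤ 1 / 2 := by
    intro j
    have := (hcap j).eventually_lt_const (show (0 : ℝ≥0∞) < 1 / 2 by norm_num)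
    rcases this.exists with ⟨N, hN⟩
    exact ⟨N, hN.le⟩
  choose Nf hNf using hNex
  set N0 : ℕ := Finset.univ.sup Nf + 1 with hN0def
  have hN0pos : 0 < N0 := Nat.succ_pos _
  have hNle : ∀ j, Nf j ≤ N0 := fun j =>
    le_trans (Finset.le_sup (Finset.mem_univ j)) (Nat.le_succ _)
  set G := ⨆ j, μ j (AA m N0) with hGdef
  have hG : G ≤ 1 / 2 :=
    iSup_le fun j => le_trans (measure_mono (antitoneA (hNle j))) (hNf j)
  have htail : ∀ n (j : Fin (m + 1)), μ j (AA m n) ≤ G ^ (n / N0) := by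
    intro n j
    calc μ j (AA m n) ≤ μ j (AA m (n / N0 * N0)) :=
          measure_mono (antitoneA (Nat.div_mul_le_self n N0))
      _ ≤ G ^ (n / N0) := tail_pow Q μ hprob hMRP N0 (n / N0) j
  -- the summands
  set e : ℕ → (ℕ → Fin (m + 1) × ℝ) → ℝ≥0∞ :=
    fun n ω => Set.indicator (AA m n) (fun ω => ENNReal.ofReal |(ω n).2|) ω with hedef
  have hemeas : ∀ n, Measurable (e n) := fun n =>
    Measurable.indicator
      (ENNReal.measurable_ofReal.comp ((measurable_snd.comp (measurable_pi_apply n)).abs))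
      (measA n)
  have hepow : ∀ n ω, e n ω ^ (d : ℝ) =
      Set.indicator (AA m n) (fun ω => (ENNReal.ofReal |(ω n).2|) ^ d) ω := by
    intro n ω
    by_cases hω : ω ∈ AA m n
    · rw [hedef]
      simp only [Set.indicator_of_mem hω]
      exact ENNReal.rpow_natCast _ d
    · rw [hedef]
      simp only [Set.indicator_of_notMem hω]
      exact ENNReal.zero_rpow_of_pos hdR
  have heint : ∀ n, ∫⁻ ω, e n ω ^ (d : ℝ) ∂ μ i ≤ M * G ^ (n / N0) := by
    intro n
    calc ∫⁻ ω, e n ω ^ (d : ℝ) ∂ μ i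
        = ∫⁻ ω, Set.indicator (AA m n) (fun ω => (ENNReal.ofReal |(ω n).2|) ^ d) ω ∂ μ i :=
          lintegral_congr fun ω => hepow n ω
      _ ≤ M * μ i (AA m n) := moment_bound Q μ hprob hMRP d hMtop n i
      _ ≤ M * G ^ (n / N0) := mul_le_mul_right (htail n i) M
  have hc : (0 : ℝ) < 1 / (d : ℝ) := by positivity
  set r := G ^ (1 / (d : ℝ)) with hrdef
  have hr1 : r < 1 :=
    ENNReal.rpow_lt_one (lt_of_le_of_lt hG (by norm_num)) hc
  set S := ∑' n : ℕ, M ^ (1 / (d : ℝ)) * r ^ (n / N0) with hSdef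
  have hS : S ≠ ⊤ := by
    haveI : NeZero N0 := ⟨hN0pos.ne'⟩
    rw [hSdef, ENNReal.tsum_mul_left]
    have h1 : (∑' n : ℕ, r ^ (n / N0)) = (N0 : ℝ≥0∞) * (1 - r)⁻¹ := by
      calc (∑' n : ℕ, r ^ (n / N0)) = ∑' p : ℕ × Fin N0, r ^ p.1 :=
            (Nat.divModEquiv N0).tsum_eq fun p => r ^ p.1
        _ = ∑' k : ℕ, ∑' _j : Fin N0, r ^ k := ENNReal.tsum_prod (f := fun (k : ℕ) (_ : Fin N0) => r ^ k)
        _ = ∑' k : ℕ, (N0 : ℝ≥0∞) * r ^ k := by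
            refine tsum_congr fun k => ?_
            rw [tsum_fintype]
            simp [Finset.sum_const, mul_comm]
        _ = (N0 : ℝ≥0∞) * (1 - r)⁻¹ := by
            rw [ENNReal.tsum_mul_left, ENNReal.tsum_geometric]
    rw [h1]
    have hM' : M ^ (1 / (d : ℝ)) ≠ ⊤ := (ENNReal.rpow_lt_top_of_nonneg hc.le hMtop).ne
    have hinv : ((1 : ℝ≥0∞) - r)⁻¹ ≠ ⊤ := by
      rw [ENNReal.inv_ne_top]
      exact (tsub_pos_of_lt hr1).ne'
    exact ENNReal.mul_ne_top hM' (ENNReal.mul_ne_top (natCast_ne_top N0) hinv)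
  -- partial sums and Minkowski
  set F : ℕ → (ℕ → Fin (m + 1) × ℝ) → ℝ≥0∞ :=
    fun K ω => ∑ n ∈ Finset.range K, e n ω with hFdef
  have hFmeas : ∀ K, Measurable (F K) := fun K =>
    Finset.measurable_sum _ fun n _ => hemeas n
  have hmink : ∀ K, (∫⁻ ω, F K ω ^ (d : ℝ) ∂ μ i) ^ (1 / (d : ℝ)) ≤
      ∑ n ∈ Finset.range K, (∫⁻ ω, e n ω ^ (d : ℝ) ∂ μ i) ^ (1 / (d : ℝ)) := by
    intro K
    induction K with
    | zero =>
      have hz : ∀ ω : ℕ → Fin (m + 1) × ℝ, F 0 ω ^ (d : ℝ) = 0 := fun ω => by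
        simp [hFdef, ENNReal.zero_rpow_of_pos hdR]
      rw [lintegral_congr hz, lintegral_zero, ENNReal.zero_rpow_of_pos hc]
      simp
    | succ K ihK =>
      have hsum : F (K + 1) = F K + e K := by
        funext ω
        simp [hFdef, Finset.sum_range_succ]
      calc (∫⁻ ω, F (K + 1) ω ^ (d : ℝ) ∂ μ i) ^ (1 / (d : ℝ))
          = (∫⁻ ω, (F K + e K) ω ^ (d : ℝ) ∂ μ i) ^ (1 / (d : ℝ)) := by rw [hsum]
        _ ≤ (∫⁻ ω, F K ω ^ (d : ℝ) ∂ μ i) ^ (1 / (d : ℝ)) +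
              (∫⁻ ω, e K ω ^ (d : ℝ) ∂ μ i) ^ (1 / (d : ℝ)) :=
            ENNReal.lintegral_Lp_add_le (hFmeas K).aemeasurable (hemeas K).aemeasurable hd1
        _ ≤ ∑ n ∈ Finset.range (K + 1), (∫⁻ ω, e n ω ^ (d : ℝ) ∂ μ i) ^ (1 / (d : ℝ)) := by
            rw [Finset.sum_range_succ]
            exact add_le_add_left ihK _
  have hterm : ∀ n, (∫⁻ ω, e n ω ^ (d : ℝ) ∂ μ i) ^ (1 / (d : ℝ)) ≤
      M ^ (1 / (d : ℝ)) * r ^ (n / N0) := by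
    intro n
    calc (∫⁻ ω, e n ω ^ (d : ℝ) ∂ μ i) ^ (1 / (d : ℝ))
        ≤ (M * G ^ (n / N0)) ^ (1 / (d : ℝ)) := ENNReal.rpow_le_rpow (heint n) hc.le
      _ = M ^ (1 / (d : ℝ)) * (G ^ (n / N0)) ^ (1 / (d : ℝ)) :=
          ENNReal.mul_rpow_of_nonneg _ _ hc.le
      _ = M ^ (1 / (d : ℝ)) * r ^ (n / N0) := by
          rw [hrdef, ← ENNReal.rpow_natCast G (n / N0), ← ENNReal.rpow_mul,
            mul_comm ((n / N0 : ℕ) : ℝ) (1 / (d : ℝ)), ENNReal.rpow_mul,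
            ENNReal.rpow_natCast]
  have hbound : ∀ K, ∫⁻ ω, F K ω ^ (d : ℝ) ∂ μ i ≤ S ^ (d : ℝ) := by
    intro K
    have h1 : (∫⁻ ω, F K ω ^ (d : ℝ) ∂ μ i) ^ (1 / (d : ℝ)) ≤ S :=
      (hmink K).trans ((Finset.sum_le_sum fun n _ => hterm n).trans
        (ENNReal.sum_le_tsum _))
    have h2 := ENNReal.rpow_le_rpow h1 hdR.le
    rwa [← ENNReal.rpow_mul, one_div, inv_mul_cancel₀ hdR.ne', ENNReal.rpow_one] at h2
  -- pointwise comparison of the reward with the dominating series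
  have hpt : ∀ ω, (ENNReal.ofReal |hitReward ω|) ^ d ≤ (∑' n, e n ω) ^ d := by
    intro ω
    refine pow_le_pow_left' ?_ d
    calc ENNReal.ofReal |hitReward ω|
        ≤ ENNReal.ofReal (∑ n ∈ Finset.range (sInf {n | (ω n).1 = 0} + 1), |(ω n).2|) :=
          ENNReal.ofReal_le_ofReal (Finset.abs_sum_le_sum_abs _ _)
      _ = ∑ n ∈ Finset.range (sInf {n | (ω n).1 = 0} + 1), ENNReal.ofReal |(ω n).2| :=
          ENNReal.ofReal_sum_of_nonneg fun n _ => abs_nonneg _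
      _ ≤ ∑ n ∈ Finset.range (sInf {n | (ω n).1 = 0} + 1), e n ω := by
          refine Finset.sum_le_sum fun n hn => ?_
          have hωA : ω ∈ AA m n := by
            intro k hk hc0
            have h1 : sInf {n | (ω n).1 = 0} ≤ k := Nat.sInf_le hc0
            have h2 : n ≤ sInf {n | (ω n).1 = 0} := by
              have := Finset.mem_range.mp hn
              omega
            omega
          rw [hedef]
          simp only [Set.indicator_of_mem hωA]
          exact le_refl _
      _ ≤ ∑' n, e n ω := ENNReal.sum_le_tsum _
  have hsup : ∀ ω, (∑' n, e n ω) ^ d = ⨆ K, F K ω ^ d := by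
    intro ω
    rw [ENNReal.tsum_eq_iSup_nat]
    exact Monotone.map_iSup_of_continuousAt (f := fun x : ℝ≥0∞ => x ^ d)
      (ENNReal.continuous_pow d).continuousAt (fun x y h => pow_le_pow_left' h d)
      (zero_pow hd.ne')
  have hfinal : ∫⁻ ω, (ENNReal.ofReal |hitReward ω|) ^ d ∂ μ i ≤ S ^ (d : ℝ) := by
    calc ∫⁻ ω, (ENNReal.ofReal |hitReward ω|) ^ d ∂ μ i
        ≤ ∫⁻ ω, ⨆ K, F K ω ^ d ∂ μ i :=
          lintegral_mono fun ω => (hpt ω).trans_eq (hsup ω)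
      _ = ⨆ K, ∫⁻ ω, F K ω ^ d ∂ μ i := by
          refine lintegral_iSup (fun K => (hFmeas K).pow_const d) ?_
          intro K L hKL ω
          exact pow_le_pow_left'
            (Finset.sum_le_sum_of_subset (Finset.range_subset_range.mpr hKL)) d
      _ ≤ S ^ (d : ℝ) := by
          refine iSup_le fun K => ?_
          calc ∫⁻ ω, F K ω ^ d ∂ μ i = ∫⁻ ω, F K ω ^ (d : ℝ) ∂ μ i :=
                lintegral_congr fun ω => (ENNReal.rpow_natCast _ d).symm
            _ ≤ S ^ (d : ℝ) := hbound K
  exact ne_top_of_le_ne_top (ENNReal.rpow_lt_top_of_nonneg hdR.le hS).ne hfinal
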